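/- Soundness of pv with respect to intuitionistic interpretation: if pv(𝒫, G) holds, then under any valuation v of atoms to propositions, the truth of all clauses in 𝒫 (interpreting & as conjunction, ⊃ and ⇒ as implication, ∀ and ∃ standardly) implies the truth of G. -/
import Mathlib


/-- First-order terms (de Bruijn variables). -/
inductive Tm : Type
  | var : ℕ → Tm
  | cst : ℕ → Tm
  | app : Tm → Tm → Tm

def Tm.rename (f : ℕ → ℕ) : Tm → Tm
  | .var n => .var (f n)
  | .cst c => .cst c
  | .app s t => .app (s.rename f) (t.rename f)

def Tm.subst (σ : ℕ → Tm) : Tm → Tm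
  | .var n => σ n
  | .cst c => .cst c
  | .app s t => .app (s.subst σ) (t.subst σ)

/-- Lift a substitution under a binder. -/
def liftSub (σ : ℕ → Tm) : ℕ → Tm
  | 0 => .var 0
  | n + 1 => (σ n).rename (· + 1)

mutual
/-- Goals: G ::= A | G ∧ G | D ⇒ G | ∃x G -/
inductive Goal : Type
  | atom : ℕ → Tm → Goal
  | conj : Goal → Goal → Goal
  | impl : Clause → Goal → Goal
  | ex : Goal → Goal
/-- Clauses: D ::= A | G ⊃ D | ∀x D | D & D -/
inductive Clause : Type
  | atom : ℕ → Tm → Clause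
  | himp : Goal → Clause → Clause
  | all : Clause → Clause
  | amp : Clause → Clause → Clause
end

mutual
def Goal.subst (σ : ℕ → Tm) : Goal → Goal
  | .atom p t => .atom p (t.subst σ)
  | .conj g1 g2 => .conj (g1.subst σ) (g2.subst σ)
  | .impl d g => .impl (d.subst σ) (g.subst σ)
  | .ex g => .ex (g.subst (liftSub σ))
def Clause.subst (σ : ℕ → Tm) : Clause → Clause
  | .atom p t => .atom p (t.subst σ)
  | .himp g d => .himp (g.subst σ) (d.subst σ)
  | .all d => .all (d.subst (liftSub σ))
  | .amp d1 d2 => .amp (d1.subst σ) (d2.subst σ)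
end

/-- Substitution instantiating de Bruijn index 0 with `t`. -/
def consSub (t : Tm) : ℕ → Tm
  | 0 => t
  | n + 1 => .var n

/-- [t/x]G -/
def Goal.inst (t : Tm) (g : Goal) : Goal := g.subst (consSub t)
/-- [t/x]D -/
def Clause.inst (t : Tm) (d : Clause) : Clause := d.subst (consSub t)

mutual
/-- Goal-reduction judgment pv(𝒫, G). -/
inductive pvG : Set Clause → Goal → Prop
  | atom {P : Set Clause} {p t D} : D ∈ P → pvB D P p t → pvG P (.atom p t)
  | conj {P g1 g2} : pvG P g1 → pvG P g2 → pvG P (.conj g1 g2)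
  | impl {P d g} : pvG ({d} ∪ P) g → pvG P (.impl d g)
  | ex {P g} (t : Tm) : pvG P (g.inst t) → pvG P (.ex g)
/-- Backchaining judgment pv(D; 𝒫, A) where A = atom p t. -/
inductive pvB : Clause → Set Clause → ℕ → Tm → Prop
  | atom {P p t} : pvB (.atom p t) P p t
  | himp {P g d p t} : pvG P g → pvB d P p t → pvB (.himp g d) P p t
  | all {P d p a} (t : Tm) : pvB (d.inst t) P p a → pvB (.all d) P p a
  | ampL {P d0 d1 p a} : pvB d0 P p a → pvB (.amp d0 d1) P p a
  | ampR {P d0 d1 p a} : pvB d1 P p a → pvB (.amp d0 d1) P p a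
end

/-- Environment extension at a binder: index 0 ↦ t. -/
def consEnv (t : Tm) (ρ : ℕ → Tm) : ℕ → Tm
  | 0 => t
  | n + 1 => ρ n

mutual
/-- Interpretation ⟦G⟧ of goals into Prop, with atom valuation v and
environment ρ for free variables. -/
def semG (v : ℕ → Tm → Prop) (ρ : ℕ → Tm) : Goal → Prop
  | .atom p t => v p (t.subst ρ)
  | .conj g1 g2 => semG v ρ g1 ∧ semG v ρ g2
  | .impl d g => semC v ρ d → semG v ρ g
  | .ex g => ∃ t : Tm, semG v (consEnv t ρ) g
/-- Interpretation ⟦D⟧ of clauses into Prop: & as conjunction, ⊃ as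
implication, ∀ standardly. -/
def semC (v : ℕ → Tm → Prop) (ρ : ℕ → Tm) : Clause → Prop
  | .atom p t => v p (t.subst ρ)
  | .himp g d => semG v ρ g → semC v ρ d
  | .all d => ∀ t : Tm, semC v (consEnv t ρ) d
  | .amp d0 d1 => semC v ρ d0 ∧ semC v ρ d1
end

lemma Tm.subst_rename (f : ℕ → ℕ) (τ : ℕ → Tm) (t : Tm) :
    (t.rename f).subst τ = t.subst (fun n => τ (f n)) := by
  induction t <;> simp [Tm.rename, Tm.subst, *]

lemma Tm.subst_subst (σ τ : ℕ → Tm) (t : Tm) :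
    (t.subst σ).subst τ = t.subst (fun n => (σ n).subst τ) := by
  induction t <;> simp [Tm.subst, *]

lemma liftSub_comp (σ : ℕ → Tm) (ρ : ℕ → Tm) (u : Tm) :
    (fun n => (liftSub σ n).subst (consEnv u ρ)) =
      consEnv u (fun n => (σ n).subst ρ) := by
  funext n
  cases n with
  | zero => rfl
  | succ n =>
    simp [liftSub, consEnv, Tm.subst_rename]

mutual
lemma semG_subst (v : ℕ → Tm → Prop) (g : Goal) :
    ∀ (σ ρ : ℕ → Tm),
    semG v ρ (g.subst σ) ↔ semG v (fun n => (σ n).subst ρ) g := by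
  cases g with
  | atom p t => intro σ ρ; simp [Goal.subst, semG, Tm.subst_subst]
  | conj g1 g2 =>
    intro σ ρ
    simp [Goal.subst, semG, semG_subst v g1 σ ρ, semG_subst v g2 σ ρ]
  | impl d g =>
    intro σ ρ
    simp [Goal.subst, semG, semG_subst v g σ ρ, semC_subst v d σ ρ]
  | ex g =>
    intro σ ρ
    simp only [Goal.subst, semG]
    exact exists_congr fun u => by
      rw [semG_subst v g (liftSub σ) (consEnv u ρ), liftSub_comp]

lemma semC_subst (v : ℕ → Tm → Prop) (d : Clause) :
    ∀ (σ ρ : ℕ → Tm),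
    semC v ρ (d.subst σ) ↔ semC v (fun n => (σ n).subst ρ) d := by
  cases d with
  | atom p t => intro σ ρ; simp [Clause.subst, semC, Tm.subst_subst]
  | himp g d =>
    intro σ ρ
    simp [Clause.subst, semC, semG_subst v g σ ρ, semC_subst v d σ ρ]
  | all d =>
    intro σ ρ
    simp only [Clause.subst, semC]
    exact forall_congr' fun u => by
      rw [semC_subst v d (liftSub σ) (consEnv u ρ), liftSub_comp]
  | amp d0 d1 =>
    intro σ ρ
    simp [Clause.subst, semC, semC_subst v d0 σ ρ, semC_subst v d1 σ ρ]
end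

lemma consSub_comp (t : Tm) (ρ : ℕ → Tm) :
    (fun n => (consSub t n).subst ρ) = consEnv (t.subst ρ) ρ := by
  funext n; cases n <;> rfl

lemma semG_inst (v : ℕ → Tm → Prop) (ρ : ℕ → Tm) (g : Goal) (t : Tm) :
    semG v ρ (g.inst t) ↔ semG v (consEnv (t.subst ρ) ρ) g := by
  rw [Goal.inst, semG_subst, consSub_comp]

lemma semC_inst (v : ℕ → Tm → Prop) (ρ : ℕ → Tm) (d : Clause) (t : Tm) :
    semC v ρ (d.inst t) ↔ semC v (consEnv (t.subst ρ) ρ) d := by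
  rw [Clause.inst, semC_subst, consSub_comp]

/-- Soundness of pv (mutually with backchaining) with respect to the
intuitionistic interpretation. -/
theorem pv_sound (v : ℕ → Tm → Prop) (ρ : ℕ → Tm) :
    (∀ (P : Set Clause) (G : Goal),
      pvG P G → (∀ D ∈ P, semC v ρ D) → semG v ρ G) ∧
    (∀ (D : Clause) (P : Set Clause) (p : ℕ) (t : Tm),
      pvB D P p t → semC v ρ D → (∀ D' ∈ P, semC v ρ D') → v p (t.subst ρ)) := by
  let motG : (P : Set Clause) → (G : Goal) → pvG P G → Prop :=
    fun P G _ => (∀ D ∈ P, semC v ρ D) → semG v ρ G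
  let motB : (D : Clause) → (P : Set Clause) → (p : ℕ) → (t : Tm) →
      pvB D P p t → Prop :=
    fun D P p t _ => semC v ρ D → (∀ D' ∈ P, semC v ρ D') → v p (t.subst ρ)
  have hatom : ∀ {P p t D} (hD : D ∈ P) (h : pvB D P p t),
      motB D P p t h → motG P (.atom p t) (pvG.atom hD h) :=
    fun hD _ ih hP => ih (hP _ hD) hP
  have hconj : ∀ {P g1 g2} (h1 : pvG P g1) (h2 : pvG P g2),
      motG P g1 h1 → motG P g2 h2 → motG P (.conj g1 g2) (pvG.conj h1 h2) :=
    fun _ _ ih1 ih2 hP => ⟨ih1 hP, ih2 hP⟩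
  have himpl : ∀ {P d g} (h : pvG ({d} ∪ P) g),
      motG _ g h → motG P (.impl d g) (pvG.impl h) := by
    intro P d g h ih hP hd
    exact ih (fun D' hD' => by rcases hD' with h' | h'
                               · cases h'; exact hd
                               · exact hP _ h')
  have hex : ∀ {P g} (t : Tm) (h : pvG P (g.inst t)),
      motG P _ h → motG P (.ex g) (pvG.ex t h) := by
    intro P g t h ih hP
    exact ⟨t.subst ρ, (semG_inst v ρ g t).mp (ih hP)⟩
  have hBatom : ∀ {P p t}, motB (.atom p t) P p t pvB.atom :=
    fun hd _ => hd
  have hBhimp : ∀ {P g d p t} (hg : pvG P g) (hd : pvB d P p t),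
      motG P g hg → motB d P p t hd → motB (.himp g d) P p t (pvB.himp hg hd) :=
    fun _ _ ihg ihd hsem hP => ihd (hsem (ihg hP)) hP
  have hBall : ∀ {P d p a} (t : Tm) (h : pvB (d.inst t) P p a),
      motB _ P p a h → motB (.all d) P p a (pvB.all t h) := by
    intro P d p a t h ih hsem hP
    exact ih ((semC_inst v ρ d t).mpr (hsem (t.subst ρ))) hP
  have hBampL : ∀ {P d0 d1 p a} (h : pvB d0 P p a),
      motB d0 P p a h → motB (.amp d0 d1) P p a (pvB.ampL h) :=
    fun _ ih hsem hP => ih hsem.1 hP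
  have hBampR : ∀ {P d0 d1 p a} (h : pvB d1 P p a),
      motB d1 P p a h → motB (.amp d0 d1) P p a (pvB.ampR h) :=
    fun _ ih hsem hP => ih hsem.2 hP
  constructor
  · intro P G h
    exact pvG.rec (motive_1 := motG) (motive_2 := motB)
      hatom hconj himpl hex hBatom hBhimp hBall hBampL hBampR h
  · intro D P p t h
    exact pvB.rec (motive_1 := motG) (motive_2 := motB)
      hatom hconj himpl hex hBatom hBhimp hBall hBampL hBampR h
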